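/- (Bucket counting inequality.) Let ε be a real number with 0 < ε ≤ 1/2, let k and n be positive integers, and let c₁, …, c_k be positive reals with ∑_{j=1}^{k} c_j ≤ n. For each integer i ≥ 0 set s_i = ε·(n/k)·(1+ε)^i, and define k₀ = #{ j : c_j ≤ s₀ } and, for i ≥ 1, k_i = #{ j : s_{i−1} < c_j ≤ s_i }. Then ∑_{i ≥ 0} k_i · ⌈(1+ε)^i⌉ ≤ ((1 + 3ε)/ε) · k. -/

import Mathlib

open scoped BigOperators Classical

/-- The bucket counting inequality: if `c₁, …, c_k > 0` sum to at most `n`, the size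
thresholds are `s i = ε·(n/k)·(1+ε)^i`, `k₀` counts the `c j ≤ s 0` and `k_i` counts
the `c j ∈ (s (i-1), s i]`, then `∑ i, k_i · ⌈(1+ε)^i⌉ ≤ ((1+3ε)/ε) · k`
(every partial sum of the series is bounded by the right-hand side). -/
theorem bucket_counting
    (ε : ℝ) (hε : 0 < ε) (hε' : ε ≤ 1 / 2)
    (k n : ℕ) (hk : 0 < k) (hn : 0 < n)
    (c : Fin k → ℝ) (hc : ∀ j, 0 < c j) (hsum : ∑ j, c j ≤ (n : ℝ)) :
    ∀ N : ℕ,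
      ∑ i ∈ Finset.range N,
        (((Finset.univ.filter (fun j : Fin k =>
            if i = 0 then c j ≤ ε * ((n : ℝ) / (k : ℝ)) * (1 + ε) ^ (0 : ℕ)
            else ε * ((n : ℝ) / (k : ℝ)) * (1 + ε) ^ (i - 1) < c j ∧
              c j ≤ ε * ((n : ℝ) / (k : ℝ)) * (1 + ε) ^ i)).card : ℝ) *
          (⌈(1 + ε) ^ i⌉₊ : ℝ)) ≤
      ((1 + 3 * ε) / ε) * (k : ℝ) := by
  intro N
  have hk0 : (0:ℝ) < (k:ℝ) := by exact_mod_cast hk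
  have hn0 : (0:ℝ) < (n:ℝ) := by exact_mod_cast hn
  set s : ℝ := ε * ((n : ℝ) / (k : ℝ)) with hs
  have hspos : 0 < s := by positivity
  have hone : (1:ℝ) ≤ 1 + ε := by linarith
  set B : ℕ → Finset (Fin k) := fun i => Finset.univ.filter (fun j : Fin k =>
      if i = 0 then c j ≤ s * (1 + ε) ^ (0 : ℕ)
      else s * (1 + ε) ^ (i - 1) < c j ∧ c j ≤ s * (1 + ε) ^ i) with hB
  -- membership facts
  have hupper : ∀ i, ∀ j ∈ B i, c j ≤ s * (1 + ε) ^ i := by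
    intro i j hj
    simp only [hB, Finset.mem_filter] at hj
    by_cases h0 : i = 0
    · subst h0; simpa using hj.2
    · rw [if_neg h0] at hj; exact hj.2.2
  have hlower : ∀ i, i ≠ 0 → ∀ j ∈ B i, s * (1 + ε) ^ (i - 1) < c j := by
    intro i hi j hj
    simp only [hB, Finset.mem_filter, if_neg hi] at hj
    exact hj.2.1
  have hdisj : ∀ i i', i < i' → Disjoint (B i) (B i') := by
    intro i i' hlt
    rw [Finset.disjoint_left]
    intro j hj hj'
    have h1 : c j ≤ s * (1 + ε) ^ i := hupper i j hj
    have h2 : s * (1 + ε) ^ (i' - 1) < c j := hlower i' (by omega) j hj'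
    have h3 : s * (1 + ε) ^ i ≤ s * (1 + ε) ^ (i' - 1) := by
      apply mul_le_mul_of_nonneg_left _ hspos.le
      exact pow_le_pow_right₀ hone (by omega)
    linarith
  have hdisj' : ∀ i i', i ≠ i' → Disjoint (B i) (B i') := by
    intro i i' h
    rcases lt_or_gt_of_ne h with h' | h'
    · exact hdisj i i' h'
    · exact (hdisj i' i h').symm
  -- total count bound
  have hcount : ∑ i ∈ Finset.range N, ((B i).card : ℝ) ≤ (k : ℝ) := by
    have h1 : ∑ i ∈ Finset.range N, (B i).card
        = ((Finset.range N).biUnion B).card := by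
      exact (Finset.card_biUnion (fun i _ i' _ h => hdisj' i i' h)).symm
    have h2 : ((Finset.range N).biUnion B).card ≤ k := by
      simpa using Finset.card_le_card (Finset.subset_univ ((Finset.range N).biUnion B))
    calc ∑ i ∈ Finset.range N, ((B i).card : ℝ)
        = ((∑ i ∈ Finset.range N, (B i).card : ℕ) : ℝ) := by push_cast; ring
      _ ≤ (k : ℝ) := by rw [h1]; exact_mod_cast h2
  -- weighted bound for i ≥ 1
  have hterm : ∀ i ∈ (Finset.range N).erase 0,
      ((B i).card : ℝ) * (1 + ε) ^ i ≤ ((1+ε)/s) * ∑ j ∈ B i, c j := by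
    intro i hi
    have hi0 : i ≠ 0 := Finset.ne_of_mem_erase hi
    have hsumge : ((B i).card : ℝ) * (s * (1 + ε) ^ (i - 1)) ≤ ∑ j ∈ B i, c j := by
      have := Finset.card_nsmul_le_sum (B i) c (s * (1 + ε) ^ (i - 1))
        (fun j hj => (hlower i hi0 j hj).le)
      simpa [nsmul_eq_mul] using this
    have hpow : (1 + ε) ^ i = (1 + ε) * (1 + ε) ^ (i - 1) := by
      conv_lhs => rw [show i = (i-1)+1 by omega]
      ring
    rw [hpow]
    have := mul_le_mul_of_nonneg_left hsumge (by positivity : (0:ℝ) ≤ (1+ε)/s)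
    calc ((B i).card : ℝ) * ((1 + ε) * (1 + ε) ^ (i - 1))
        = ((1+ε)/s) * (((B i).card : ℝ) * (s * (1 + ε) ^ (i - 1))) := by
          rw [div_mul_eq_mul_div, eq_div_iff hspos.ne']; ring
      _ ≤ ((1+ε)/s) * ∑ j ∈ B i, c j := this
  have hweight : ∑ i ∈ (Finset.range N).erase 0, ((B i).card : ℝ) * (1 + ε) ^ i
      ≤ ((1+ε)/s) * (n : ℝ) := by
    calc ∑ i ∈ (Finset.range N).erase 0, ((B i).card : ℝ) * (1 + ε) ^ i
        ≤ ∑ i ∈ (Finset.range N).erase 0, ((1+ε)/s) * ∑ j ∈ B i, c j :=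
          Finset.sum_le_sum hterm
      _ = ((1+ε)/s) * ∑ i ∈ (Finset.range N).erase 0, ∑ j ∈ B i, c j := by
          rw [Finset.mul_sum]
      _ = ((1+ε)/s) * ∑ j ∈ ((Finset.range N).erase 0).biUnion B, c j := by
          rw [Finset.sum_biUnion (fun i hi i' hi' h => hdisj' i i' h)]
      _ ≤ ((1+ε)/s) * ∑ j, c j := by
          apply mul_le_mul_of_nonneg_left _ (by positivity)
          exact Finset.sum_le_sum_of_subset_of_nonneg (Finset.subset_univ _)
            (fun j _ _ => (hc j).le)
      _ ≤ ((1+ε)/s) * (n : ℝ) := by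
          apply mul_le_mul_of_nonneg_left hsum (by positivity)
  have hval : ((1+ε)/s) * (n:ℝ) = (1+ε) * (k:ℝ) / ε := by
    rw [hs]; field_simp
  -- zero bucket bound
  have hzero : ((B 0).card : ℝ) ≤ (k : ℝ) := by
    have h := Finset.card_le_card (Finset.subset_univ (B 0))
    rw [Finset.card_univ, Fintype.card_fin] at h
    exact_mod_cast h
  -- ceiling bound
  have hceil : ∀ i : ℕ, (⌈(1 + ε) ^ i⌉₊ : ℝ) ≤ (1 + ε) ^ i + 1 := by
    intro i
    exact (Nat.ceil_lt_add_one (by positivity)).le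
  -- assemble
  have hsplit : ∑ i ∈ Finset.range N, ((B i).card : ℝ) * (⌈(1 + ε) ^ i⌉₊ : ℝ)
      ≤ (∑ i ∈ Finset.range N, ((B i).card : ℝ))
        + ∑ i ∈ Finset.range N, ((B i).card : ℝ) * (1 + ε) ^ i := by
    rw [← Finset.sum_add_distrib]
    apply Finset.sum_le_sum
    intro i _
    have h1 : (0:ℝ) ≤ ((B i).card : ℝ) := Nat.cast_nonneg _
    have h2 := mul_le_mul_of_nonneg_left (hceil i) h1
    linarith [h2]
  have hW : ∑ i ∈ Finset.range N, ((B i).card : ℝ) * (1 + ε) ^ i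
      ≤ (k:ℝ) + (1+ε) * (k:ℝ) / ε := by
    by_cases hN : 0 ∈ Finset.range N
    · have : Finset.range N = insert 0 ((Finset.range N).erase 0) :=
        (Finset.insert_erase hN).symm
      rw [this, Finset.sum_insert (Finset.notMem_erase 0 _)]
      have := hweight
      rw [hval] at this
      simp only [pow_zero, mul_one]
      linarith
    · have : N = 0 := by
        by_contra h
        exact hN (Finset.mem_range.mpr (Nat.pos_of_ne_zero h))
      subst this
      simp
      positivity
  have hfinal : (k:ℝ) + ((k:ℝ) + (1+ε) * (k:ℝ) / ε) = ((1 + 3*ε)/ε) * (k:ℝ) := by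
    field_simp; ring
  calc ∑ i ∈ Finset.range N, ((B i).card : ℝ) * (⌈(1 + ε) ^ i⌉₊ : ℝ)
      ≤ (∑ i ∈ Finset.range N, ((B i).card : ℝ))
        + ∑ i ∈ Finset.range N, ((B i).card : ℝ) * (1 + ε) ^ i := hsplit
    _ ≤ (k:ℝ) + ((k:ℝ) + (1+ε) * (k:ℝ) / ε) := by linarith [hcount, hW]
    _ = ((1 + 3*ε)/ε) * (k:ℝ) := hfinal
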